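/- arXiv:1712.01416 — 4 statements merged into one kernel-verified Lean document; each statement's English description precedes it below -/
import Mathlib

section
/- Let X ⊂ C \ {0} be a finite set of nonzero complex numbers. Then there exists a positive integer k such that Re(α^k) > 0 for every α ∈ X. -/
/-- For a finite set `X` of nonzero complex numbers, there is a positive integer `k` with
`Re(α^k) > 0` for every `α ∈ X`. -/
theorem stmt10 (X : Finset ℂ) (hX : (0 : ℂ) ∉ X) :
    ∃ k : ℕ, 0 < k ∧ ∀ α ∈ X, 0 < (α ^ k).re := by
  classical
  set g : ℕ → (X → ℂ) := fun n α => ((α : ℂ) / ‖(α : ℂ)‖) ^ n with hg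
  have hnorm : ∀ (α : X), ‖(α : ℂ) / ‖(α : ℂ)‖‖ = 1 := by
    intro α
    have hα : (α : ℂ) ≠ 0 := fun h => hX (h ▸ α.2)
    rw [norm_div, Complex.norm_real, norm_norm, div_self (norm_ne_zero_iff.mpr hα)]
  have hmem : ∀ n, g n ∈ Metric.closedBall (0 : X → ℂ) 1 := by
    intro n
    rw [Metric.mem_closedBall, dist_zero_right, pi_norm_le_iff_of_nonneg zero_le_one]
    intro α
    rw [hg]
    simp only []
    rw [norm_pow, hnorm α, one_pow]
  have hcomp : IsCompact (Metric.closedBall (0 : X → ℂ) 1) :=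
    isCompact_closedBall 0 1
  obtain ⟨x, -, φ, hφ, hconv⟩ := hcomp.tendsto_subseq hmem
  have hcauchy : CauchySeq (g ∘ φ) := hconv.cauchySeq
  rw [Metric.cauchySeq_iff] at hcauchy
  obtain ⟨N, hN⟩ := hcauchy 1 one_pos
  have hlt : φ N < φ (N + 1) := hφ (Nat.lt_succ_self N)
  refine ⟨φ (N + 1) - φ N, Nat.sub_pos_of_lt hlt, ?_⟩
  intro α hα
  have hα0 : α ≠ 0 := fun h => hX (h ▸ hα)
  set β : ℂ := α / ‖α‖ with hβ
  have hβ1 : ‖β‖ = 1 := hnorm ⟨α, hα⟩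
  have hdist : dist ((g ∘ φ) (N + 1)) ((g ∘ φ) N) < 1 :=
    hN (N + 1) (Nat.le_succ N) N le_rfl
  have hcoord : ‖β ^ φ (N + 1) - β ^ φ N‖ < 1 := by
    calc ‖β ^ φ (N + 1) - β ^ φ N‖
        = dist ((g ∘ φ) (N + 1) ⟨α, hα⟩) ((g ∘ φ) N ⟨α, hα⟩) := by
          rw [dist_eq_norm]; rfl
      _ ≤ dist ((g ∘ φ) (N + 1)) ((g ∘ φ) N) := dist_le_pi_dist _ _ _
      _ < 1 := hdist
  set k := φ (N + 1) - φ N with hk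
  have hfact : β ^ φ (N + 1) - β ^ φ N = β ^ φ N * (β ^ k - 1) := by
    rw [mul_sub, mul_one, ← pow_add, Nat.add_sub_cancel' hlt.le]
  have hβk : ‖β ^ k - 1‖ < 1 := by
    have h' : ‖β ^ φ N * (β ^ k - 1)‖ < 1 := hfact ▸ hcoord
    rwa [norm_mul, norm_pow, hβ1, one_pow, one_mul] at h'
  have hre : 0 < (β ^ k).re := by
    by_contra h
    push_neg at h
    have h1 : 1 ≤ |(β ^ k - 1).re| := by
      rw [Complex.sub_re, Complex.one_re, abs_sub_comm,
        abs_of_nonneg (by linarith)]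
      linarith
    have h2 : |(β ^ k - 1).re| ≤ ‖β ^ k - 1‖ := Complex.abs_re_le_norm _
    linarith
  have hαβ : α ^ k = (‖α‖ : ℂ) ^ k * β ^ k := by
    rw [hβ, div_pow, mul_div_cancel₀]
    exact pow_ne_zero _ (by exact_mod_cast norm_ne_zero_iff.mpr hα0)
  rw [hαβ]
  have hre2 : ((‖α‖ : ℂ) ^ k * β ^ k).re = ‖α‖ ^ k * (β ^ k).re := by
    rw [← Complex.ofReal_pow, Complex.re_ofReal_mul]
  rw [hre2]
  exact mul_pos (pow_pos (norm_pos_iff.mpr hα0) k) hre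
end

section
/- Let A ∈ M_m(C[Z^r]) be non-nilpotent (i.e., A^k ≠ 0 for all k, equivalently trace(A^k) ≠ 0 in C[Z^r] for some k). Then there exists N > 0 such that for all integers j > N, the quantity t_k(jZ^r) — the sum of coefficients of trace(A^k) supported on the sublattice jZ^r — is nonzero for infinitely many values of k. -/
open scoped Classical
open Module



lemma aux_powsum_zero {t : ℕ} (μ d : Fin t → ℂ) (hinj : Function.Injective μ)
    (hμ : ∀ i, μ i ≠ 0) (h : ∀ k : ℕ, 1 ≤ k → ∑ i, d i * μ i ^ k = 0) :
    ∀ i, d i = 0 := by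
  classical
  set M : Matrix (Fin t) (Fin t) ℂ := (Matrix.vandermonde μ).transpose * Matrix.diagonal μ with hM
  have hdet : M.det ≠ 0 := by
    rw [Matrix.det_mul, Matrix.det_transpose, Matrix.det_vandermonde, Matrix.det_diagonal]
    refine mul_ne_zero (Finset.prod_ne_zero_iff.mpr fun i _ =>
      Finset.prod_ne_zero_iff.mpr fun j hj => sub_ne_zero.mpr fun e => ?_)
      (Finset.prod_ne_zero_iff.mpr fun i _ => hμ i)
    have hij := hinj e
    simp only [Finset.mem_Ioi] at hj
    exact absurd hij.symm (ne_of_lt hj)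
  have hmv : M.mulVec d = 0 := by
    funext k
    have hk := h ((k : ℕ) + 1) (by omega)
    have : M.mulVec d k = ∑ i, d i * μ i ^ ((k : ℕ) + 1) := by
      simp only [Matrix.mulVec, dotProduct, hM, Matrix.mul_apply,
        Matrix.transpose_apply, Matrix.vandermonde, Matrix.diagonal, Matrix.of_apply]
      refine Finset.sum_congr rfl fun i _ => ?_
      simp [Finset.sum_ite_eq, pow_succ]
      ring
    rw [this, hk]; rfl
  have h0 := Matrix.eq_zero_of_mulVec_eq_zero hdet hmv
  exact fun i => congrFun h0 i


lemma aux_powsum_zero' {I : Type*} [Fintype I] (mu d : I → ℂ) (hinj : Function.Injective mu)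
    (hmu : ∀ i, mu i ≠ 0) (h : ∀ k : ℕ, 1 ≤ k → ∑ i, d i * mu i ^ k = 0) :
    ∀ i, d i = 0 := by
  classical
  have e : I ≃ Fin (Fintype.card I) := Fintype.equivFin I
  have H := aux_powsum_zero (mu ∘ e.symm) (d ∘ e.symm)
    (hinj.comp e.symm.injective) (fun i => hmu _)
    (fun k hk => by rw [← h k hk]; exact Fintype.sum_equiv e.symm _ _ (fun i => rfl))
  intro i
  have := H (e i)
  simpa using this

lemma aux_isNilpotent_of_trace_pow {V : Type*} [AddCommGroup V] [Module ℂ V]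
    [FiniteDimensional ℂ V] (f : Module.End ℂ V)
    (h : ∀ k : ℕ, 1 ≤ k → LinearMap.trace ℂ V (f ^ k) = 0) : IsNilpotent f := by
  classical
  set N := f.maxGenEigenspace with hNdef
  have hmaps : ∀ μ, Set.MapsTo f (N μ) (N μ) :=
    fun μ => f.mapsTo_maxGenEigenspace_of_comm rfl μ
  have hfin : {μ | N μ ≠ ⊥}.Finite :=
    WellFoundedGT.finite_ne_bot_of_iSupIndep f.independent_maxGenEigenspace
  have hds := DirectSum.isInternal_submodule_of_iSupIndep_of_iSup_eq_top
    f.independent_maxGenEigenspace f.iSup_maxGenEigenspace_eq_top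
  -- trace of restricted powers
  have key : ∀ (μ : ℂ) (k : ℕ),
      LinearMap.trace ℂ (N μ) ((f.restrict (hmaps μ)) ^ k)
        = μ ^ k * (finrank ℂ (N μ) : ℂ) := by
    intro μ k
    have hnil : IsNilpotent ((f.restrict (hmaps μ)) - algebraMap ℂ _ μ) := by
      have h2 := f.isNilpotent_restrict_maxGenEigenspace_sub_algebraMap μ
      have heq : (f.restrict (hmaps μ)) - algebraMap ℂ _ μ
          = LinearMap.restrict (f - algebraMap ℂ (Module.End ℂ V) μ)
            (f.mapsTo_maxGenEigenspace_of_comm (Algebra.mul_sub_algebraMap_commutes f μ) μ) := by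
        ext x
        simp [LinearMap.restrict_apply, Module.algebraMap_end_apply]
        rfl
      rw [heq]; exact h2
    induction k with
    | zero => simp
    | succ k ih =>
      have hcomm : Commute ((f.restrict (hmaps μ)) ^ k) (f.restrict (hmaps μ)) :=
        (Commute.refl _).pow_left k
      have := LinearMap.trace_comp_eq_mul_of_commute_of_isNilpotent μ hcomm hnil
      rw [pow_succ, Module.End.mul_eq_comp, this, ih]
      ring
  -- global power sums vanish
  have h2 : ∀ k : ℕ, 1 ≤ k →
      ∑ μ ∈ hfin.toFinset, (finrank ℂ (N μ) : ℂ) * μ ^ k = 0 := by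
    intro k hk
    have hmapsk : ∀ μ, Set.MapsTo (f ^ k) (N μ) (N μ) :=
      fun μ => f.mapsTo_maxGenEigenspace_of_comm (Commute.pow_right rfl k) μ
    have ht := LinearMap.trace_eq_sum_trace_restrict' hds hfin hmapsk
    rw [h k hk] at ht
    have hcong : ∀ μ ∈ hfin.toFinset,
        (LinearMap.trace ℂ (N μ)) ((f ^ k).restrict (hmapsk μ))
          = (finrank ℂ (N μ) : ℂ) * μ ^ k := by
      intro μ _
      rw [← Module.End.pow_restrict k (hmaps μ), key μ k, mul_comm]
    rw [Finset.sum_congr rfl hcong] at ht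
    exact ht.symm
  -- all eigenvalues with nonzero generalized eigenspace are zero
  have hzero : ∀ μ, N μ ≠ ⊥ → μ = 0 := by
    intro μ0 hμ0
    by_contra hne
    set s' : Finset ℂ := hfin.toFinset.filter (fun μ => μ ≠ 0) with hs'
    have h3 : ∀ k : ℕ, 1 ≤ k →
        ∑ μ ∈ s', (finrank ℂ (N μ) : ℂ) * μ ^ k = 0 := by
      intro k hk
      rw [← h2 k hk]
      symm
      apply (Finset.sum_subset (Finset.filter_subset _ _) _).symm
      intro x hx hnx
      have hx0 : x = 0 := by
        by_contra hxx
        exact hnx (Finset.mem_filter.mpr ⟨hx, hxx⟩)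
      rw [hx0, zero_pow (by omega), mul_zero]
    have hvan := aux_powsum_zero' (fun x : {x // x ∈ s'} => (x : ℂ))
      (fun x : {x // x ∈ s'} => (finrank ℂ (N (x : ℂ)) : ℂ))
      (fun i j hij => Subtype.ext hij)
      (fun i => (Finset.mem_filter.mp i.2).2)
      (fun k hk => by rw [← h3 k hk]; exact Finset.sum_coe_sort s' (fun μ => (finrank ℂ (N μ) : ℂ) * μ ^ k))
    have hμ0' : μ0 ∈ s' := Finset.mem_filter.mpr ⟨hfin.mem_toFinset.mpr hμ0, hne⟩
    have hfr := hvan ⟨μ0, hμ0'⟩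
    rw [Nat.cast_eq_zero] at hfr
    exact hμ0 (Submodule.finrank_eq_zero.mp hfr)
  -- the generalized eigenspace of 0 is everything
  have htop : f.maxGenEigenspace 0 = ⊤ := by
    rw [← f.iSup_maxGenEigenspace_eq_top]
    refine le_antisymm (le_iSup _ 0) (iSup_le fun μ => ?_)
    rcases eq_or_ne (N μ) ⊥ with hb | hb
    · rw [show f.maxGenEigenspace μ = N μ from rfl, hb]; exact bot_le
    · rw [hzero μ hb]
  refine ⟨finrank ℂ V, ?_⟩
  have hker : LinearMap.ker ((f - (0:ℂ) • 1) ^ finrank ℂ V) = ⊤ := by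
    rw [← Module.End.genEigenspace_nat, ← Module.End.maxGenEigenspace_eq_genEigenspace_finrank,
      htop]
  rw [← LinearMap.ker_eq_top]
  simpa using hker



lemma aux_matrix_isNilpotent_of_trace_pow {n : Type*} [Fintype n] [DecidableEq n]
    (M : Matrix n n ℂ) (h : ∀ k : ℕ, 1 ≤ k → Matrix.trace (M ^ k) = 0) :
    IsNilpotent M := by
  classical
  have h' : ∀ k : ℕ, 1 ≤ k → LinearMap.trace ℂ (n → ℂ)
      ((Matrix.toLinAlgEquiv (Pi.basisFun ℂ n) M) ^ k) = 0 := by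
    intro k hk
    rw [← map_pow, LinearMap.trace_eq_matrix_trace ℂ (Pi.basisFun ℂ n)]
    have : LinearMap.toMatrix (Pi.basisFun ℂ n) (Pi.basisFun ℂ n)
        ((Matrix.toLinAlgEquiv (Pi.basisFun ℂ n)) (M ^ k)) = M ^ k :=
      LinearMap.toMatrix_toLin _ _ _
    rw [show ((Matrix.toLinAlgEquiv (Pi.basisFun ℂ n)) (M ^ k) : (n → ℂ) →ₗ[ℂ] (n → ℂ))
        = Matrix.toLin (Pi.basisFun ℂ n) (Pi.basisFun ℂ n) (M ^ k) from rfl,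
      LinearMap.toMatrix_toLin]
    exact h k hk
  obtain ⟨l, hl⟩ := aux_isNilpotent_of_trace_pow (Matrix.toLinAlgEquiv (Pi.basisFun ℂ n) M) h'
  refine ⟨l, ?_⟩
  apply (Matrix.toLinAlgEquiv (Pi.basisFun ℂ n)).injective
  rw [map_pow, hl, map_zero]

lemma aux_trace_pow_eq_zero_of_isNilpotent {n : Type*} [Fintype n] [DecidableEq n]
    {M : Matrix n n ℂ} (hM : IsNilpotent M) (k : ℕ) (hk : 1 ≤ k) :
    Matrix.trace (M ^ k) = 0 := by
  have hMk : IsNilpotent (M ^ k) := by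
    obtain ⟨l, hl⟩ := hM
    exact ⟨l, by rw [← pow_mul, mul_comm, pow_mul, hl, zero_pow (by omega)]⟩
  exact (Matrix.isNilpotent_trace_of_isNilpotent hMk).eq_zero

lemma aux_root_sum (j : ℕ) (hj : 1 ≤ j) (n : ℤ) :
    ∑ s : Fin j, (Complex.exp (2 * Real.pi * Complex.I / j)) ^ ((s : ℤ) * n)
      = if (j : ℤ) ∣ n then (j : ℂ) else 0 := by
  set ζ : ℂ := Complex.exp (2 * Real.pi * Complex.I / j) with hζ
  have hζ0 : ζ ≠ 0 := Complex.exp_ne_zero _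
  have hjC : (j : ℂ) ≠ 0 := Nat.cast_ne_zero.mpr (by omega)
  have hzn : ∀ m : ℤ, ζ ^ m = Complex.exp (m * (2 * Real.pi * Complex.I) / j) := by
    intro m
    rw [hζ, ← Complex.exp_int_mul]
    ring_nf
  have hdvd : ∀ m : ℤ, ζ ^ m = 1 ↔ (j : ℤ) ∣ m := by
    intro m
    rw [hzn, Complex.exp_eq_one_iff]
    constructor
    · rintro ⟨l, hl⟩
      refine ⟨l, ?_⟩
      have h2 : (m : ℂ) = (j : ℂ) * l := by
        field_simp at hl
        have hI : (2 : ℂ) * Real.pi * Complex.I ≠ 0 := by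
          simp [Real.pi_ne_zero, Complex.I_ne_zero]
        exact mul_right_cancel₀ hI (by rw [hl])
      exact_mod_cast h2
    · rintro ⟨l, hl⟩
      exact ⟨l, by rw [hl]; push_cast; field_simp⟩
  have hterm : ∀ s : Fin j, ζ ^ ((s : ℤ) * n) = (ζ ^ n) ^ (s : ℕ) := by
    intro s
    rw [mul_comm, zpow_mul, zpow_natCast]
  simp_rw [hterm]
  rw [Fin.sum_univ_eq_sum_range (fun s => (ζ ^ n) ^ s) j]
  by_cases hd : (j : ℤ) ∣ n
  · rw [if_pos hd]
    have : ζ ^ n = 1 := (hdvd n).mpr hd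
    simp [this]
  · rw [if_neg hd]
    have h1 : ζ ^ n ≠ 1 := fun e => hd ((hdvd n).mp e)
    rw [geom_sum_eq h1]
    have : (ζ ^ n) ^ j = 1 := by
      rw [← zpow_natCast, ← zpow_mul, mul_comm, zpow_mul]
      rw [show (ζ : ℂ) ^ (j : ℤ) = 1 from ?_, one_zpow]
      rw [hzn]
      rw [Complex.exp_eq_one_iff]
      exact ⟨1, by field_simp; simp⟩
    rw [this, sub_self, zero_div]



noncomputable def charHom (r j : ℕ) (t : Fin r → Fin j) :
    AddMonoidAlgebra ℂ (Fin r → ℤ) →ₐ[ℂ] ℂ :=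
  AddMonoidAlgebra.lift ℂ ℂ (Fin r → ℤ)
    { toFun := fun h => ∏ i : Fin r,
        (Complex.exp (2 * Real.pi * Complex.I / j)) ^ (((t i : ℤ)) * (Multiplicative.toAdd h i))
      map_one' := by simp
      map_mul' := by
        intro a b
        rw [← Finset.prod_mul_distrib]
        refine Finset.prod_congr rfl fun i _ => ?_
        rw [← zpow_add₀ (Complex.exp_ne_zero _)]
        congr 1
        have : Multiplicative.toAdd (a * b) i = Multiplicative.toAdd a i
            + Multiplicative.toAdd b i := rfl
        rw [this]
        ring }


lemma aux_charsum (r j : ℕ) (hj : 1 ≤ j) (x : AddMonoidAlgebra ℂ (Fin r → ℤ)) :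
    ∑ t : Fin r → Fin j, charHom r j t x
      = (j : ℂ) ^ r * ∑ h ∈ x.coeff.support, if (∀ i, (j : ℤ) ∣ h i) then x.coeff h else 0 := by
  classical
  have hφ : ∀ t : Fin r → Fin j, charHom r j t x
      = ∑ a ∈ x.coeff.support, x.coeff a * ∏ i : Fin r,
          (Complex.exp (2 * Real.pi * Complex.I / j)) ^ (((t i : ℤ)) * a i) := by
    intro t
    rw [charHom, AddMonoidAlgebra.lift_apply, Finsupp.sum]
    refine Finset.sum_congr rfl fun a _ => ?_
    rw [smul_eq_mul]
    rfl
  simp_rw [hφ]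
  rw [Finset.sum_comm]
  rw [Finset.mul_sum]
  refine Finset.sum_congr rfl fun a _ => ?_
  rw [← Finset.mul_sum]
  have hswap : ∑ t : Fin r → Fin j, ∏ i : Fin r,
      (Complex.exp (2 * Real.pi * Complex.I / j)) ^ (((t i : ℤ)) * a i)
      = ∏ i : Fin r, ∑ s : Fin j,
          (Complex.exp (2 * Real.pi * Complex.I / j)) ^ (((s : ℤ)) * a i) := by
    rw [Finset.prod_univ_sum]
    rw [Fintype.piFinset_univ]
  rw [hswap]
  have hprod : ∏ i : Fin r, ∑ s : Fin j,
      (Complex.exp (2 * Real.pi * Complex.I / j)) ^ (((s : ℤ)) * a i)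
      = if (∀ i, (j : ℤ) ∣ a i) then ((j : ℂ)) ^ r else 0 := by
    have : ∀ i : Fin r, ∑ s : Fin j,
        (Complex.exp (2 * Real.pi * Complex.I / j)) ^ (((s : ℤ)) * a i)
        = if (j : ℤ) ∣ a i then (j : ℂ) else 0 := fun i => aux_root_sum j hj (a i)
    simp_rw [this]
    by_cases hall : ∀ i, (j : ℤ) ∣ a i
    · rw [if_pos hall]
      calc ∏ i : Fin r, (if (j : ℤ) ∣ a i then (j : ℂ) else 0)
          = ∏ _i : Fin r, (j : ℂ) := Finset.prod_congr rfl fun i _ => if_pos (hall i)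
        _ = (j : ℂ) ^ r := by rw [Finset.prod_const, Finset.card_univ, Fintype.card_fin]
    · rw [if_neg hall]
      push_neg at hall
      obtain ⟨i0, hi0⟩ := hall
      exact Finset.prod_eq_zero (Finset.mem_univ i0) (if_neg hi0)
  rw [hprod]
  by_cases hall : ∀ i, (j : ℤ) ∣ a i
  · rw [if_pos hall, if_pos hall]; ring
  · rw [if_neg hall, if_neg hall]; ring


/-- If `A ∈ M_m(ℂ[ℤ^r])` is not nilpotent (some `trace(A^k) ≠ 0`), then there is `N` such that
for every `j > N`, the sum of the coefficients of `trace(A^k)` supported on the sublattice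
`jℤ^r` is nonzero for infinitely many `k`. -/
theorem stmt13 (m r : ℕ) (A : Matrix (Fin m) (Fin m) (AddMonoidAlgebra ℂ (Fin r → ℤ)))
    (hA : ∃ k : ℕ, 1 ≤ k ∧ Matrix.trace (A ^ k) ≠ 0) :
    ∃ N : ℕ, ∀ j : ℕ, N < j →
      {k : ℕ | (∑ h ∈ (Matrix.trace (A ^ k)).coeff.support,
          if (∀ i, (j : ℤ) ∣ h i) then (Matrix.trace (A ^ k)).coeff h else 0) ≠ 0}.Infinite := by
  classical
  obtain ⟨k₀, hk₀, hT⟩ := hA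
  set T := Matrix.trace (A ^ k₀) with hTdef
  obtain ⟨B, hBdef⟩ : ∃ b : ℕ,
      b = T.coeff.support.sup (fun h => Finset.univ.sup (fun i => (h i).natAbs)) := ⟨_, rfl⟩
  refine ⟨2 * B, ?_⟩
  intro j hj
  have hj1 : 1 ≤ j := lt_of_le_of_lt (Nat.zero_le _) hj
  have hbound : ∀ h ∈ T.coeff.support, ∀ i, (h i).natAbs ≤ B := by
    intro h hh i
    refine le_trans (Finset.le_sup (f := fun i => (h i).natAbs) (Finset.mem_univ i)) ?_
    rw [hBdef]
    exact Finset.le_sup (f := fun h => Finset.univ.sup (fun i => (h i).natAbs)) hh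
  -- Step A : some character does not kill T
  have hstepA : ∃ t : Fin r → Fin j, charHom r j t T ≠ 0 := by
    by_contra hall
    push_neg at hall
    obtain ⟨a, ha⟩ := (Finsupp.support_nonempty_iff (f := T.coeff)).mpr (by simpa using hT)
    have haT : T.coeff a ≠ 0 := Finsupp.mem_support_iff.mp ha
    set y : AddMonoidAlgebra ℂ (Fin r → ℤ) :=
      AddMonoidAlgebra.single (-a) 1 * T with hy
    have hyval : ∀ h, y.coeff h = T.coeff (a + h) := by
      intro h
      rw [hy, AddMonoidAlgebra.coeff_single_mul_apply]
      simp
    have hsum0 : ∑ t : Fin r → Fin j, charHom r j t y = 0 := by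
      apply Finset.sum_eq_zero
      intro t _
      rw [hy, map_mul, hall t, mul_zero]
    rw [aux_charsum r j hj1 y] at hsum0
    have hy0 : ∀ h ∈ y.coeff.support, (∀ i, (j : ℤ) ∣ h i) → h = 0 := by
      intro h hh hdvd
      have hyh : y.coeff h ≠ 0 := Finsupp.mem_support_iff.mp hh
      rw [hyval] at hyh
      have hmem : a + h ∈ T.coeff.support := Finsupp.mem_support_iff.mpr hyh
      funext i
      by_contra hne
      have hb1 : ((a + h) i).natAbs ≤ B := hbound _ hmem i
      have hb2 : (a i).natAbs ≤ B := hbound _ ha i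
      have he : h i = (a + h) i - a i := by
        simp
      have h2 : |h i| ≤ (B : ℤ) + B := by
        rw [he]
        calc |(a + h) i - a i| ≤ |(a + h) i| + |a i| := by
              rw [sub_eq_add_neg]
              exact (abs_add_le _ _).trans (by rw [abs_neg])
          _ ≤ (B : ℤ) + B := by
              have e1 : |(a + h) i| = (((a + h) i).natAbs : ℤ) := Int.abs_eq_natAbs _
              have e2 : |a i| = ((a i).natAbs : ℤ) := Int.abs_eq_natAbs _
              rw [e1, e2]
              exact add_le_add (by exact_mod_cast hb1) (by exact_mod_cast hb2)
      have h3 : (j : ℤ) ≤ |h i| :=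
        Int.le_of_dvd (abs_pos.mpr hne) ((dvd_abs _ _).mpr (hdvd i))
      have h4 : (j : ℤ) ≤ (B : ℤ) + B := le_trans h3 h2
      have hlt : ((2 * B : ℕ) : ℤ) < (j : ℤ) := by exact_mod_cast hj
      have heq : ((2 * B : ℕ) : ℤ) = (B : ℤ) + B := by push_cast; ring
      exact absurd h4 (not_le.mpr (heq ▸ hlt))
    have hinner : (∑ h ∈ y.coeff.support,
        if (∀ i, (j : ℤ) ∣ h i) then y.coeff h else 0) = T.coeff a := by
      have hcg : ∀ h ∈ y.coeff.support,
          (if (∀ i, (j : ℤ) ∣ h i) then y.coeff h else 0)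
            = (if h = 0 then y.coeff h else 0) := by
        intro h hh
        by_cases hd : ∀ i, (j : ℤ) ∣ h i
        · rw [if_pos hd, if_pos (hy0 h hh hd)]
        · rw [if_neg hd, if_neg]
          intro h0
          exact hd (by rw [h0]; intro i; simp)
      rw [Finset.sum_congr rfl hcg, Finset.sum_ite_eq' y.coeff.support 0 y.coeff]
      have h0mem : (0 : Fin r → ℤ) ∈ y.coeff.support := by
        rw [Finsupp.mem_support_iff, hyval]
        simpa using haT
      rw [if_pos h0mem, hyval]
      simp
    rw [hinner] at hsum0
    have hjr : ((j : ℂ)) ^ r ≠ 0 :=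
      pow_ne_zero _ (Nat.cast_ne_zero.mpr (Nat.one_le_iff_ne_zero.mp hj1))
    rcases mul_eq_zero.mp hsum0 with hcase | hcase
    · exact hjr hcase
    · exact haT hcase
  obtain ⟨t0, ht0⟩ := hstepA
  -- Step B : infinitude
  set Bm : (Fin r → Fin j) → Matrix (Fin m) (Fin m) ℂ :=
    fun t => (charHom r j t).mapMatrix A with hBm
  have htr : ∀ (t : Fin r → Fin j) (k : ℕ),
      Matrix.trace ((Bm t) ^ k) = charHom r j t (Matrix.trace (A ^ k)) := by
    intro t k
    rw [hBm]
    dsimp only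
    rw [← map_pow]
    rw [AddMonoidHom.map_trace (charHom r j t) (A ^ k)]
    congr 1
  have hDpow : ∀ k : ℕ, (Matrix.blockDiagonal Bm) ^ k
      = Matrix.blockDiagonal (fun t => (Bm t) ^ k) := by
    intro k
    calc (Matrix.blockDiagonal Bm) ^ k
        = (Matrix.blockDiagonalRingHom (Fin m) (Fin r → Fin j) ℂ Bm) ^ k := rfl
      _ = Matrix.blockDiagonalRingHom (Fin m) (Fin r → Fin j) ℂ (Bm ^ k) :=
          (map_pow _ _ _).symm
      _ = Matrix.blockDiagonal (fun t => (Bm t) ^ k) := rfl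
  have htrD : ∀ k : ℕ, Matrix.trace ((Matrix.blockDiagonal Bm) ^ k)
      = (j : ℂ) ^ r * ∑ h ∈ (Matrix.trace (A ^ k)).coeff.support,
          if (∀ i, (j : ℤ) ∣ h i) then (Matrix.trace (A ^ k)).coeff h else 0 := by
    intro k
    rw [hDpow k, Matrix.trace_blockDiagonal, ← aux_charsum r j hj1]
    exact Finset.sum_congr rfl fun t _ => htr t k
  by_contra hfin
  rw [Set.not_infinite] at hfin
  obtain ⟨K, hK⟩ := hfin.bddAbove
  have hSk : ∀ k : ℕ, K < k →
      (∑ h ∈ (Matrix.trace (A ^ k)).coeff.support,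
        if (∀ i, (j : ℤ) ∣ h i) then (Matrix.trace (A ^ k)).coeff h else 0) = 0 := by
    intro k hKk
    by_contra hne
    exact absurd (hK (show k ∈ _ from hne)) (Nat.not_le.mpr hKk)
  have hnil : IsNilpotent ((Matrix.blockDiagonal Bm) ^ (K + 1)) := by
    apply aux_matrix_isNilpotent_of_trace_pow
    intro k hk
    have hgt : K < (K + 1) * k :=
      lt_of_lt_of_le (Nat.lt_succ_self K) (Nat.le_mul_of_pos_right (K + 1) (by positivity))
    rw [← pow_mul, htrD ((K + 1) * k), hSk ((K + 1) * k) hgt, mul_zero]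
  have hnilD : IsNilpotent (Matrix.blockDiagonal Bm) := by
    obtain ⟨l, hl⟩ := hnil
    exact ⟨(K + 1) * l, by rw [pow_mul]; exact hl⟩
  obtain ⟨l, hl⟩ := hnilD
  have hBt0 : (Bm t0) ^ l = 0 := by
    rw [hDpow l] at hl
    ext i i'
    have := congrFun (congrFun hl (i, t0)) (i', t0)
    rwa [Matrix.blockDiagonal_apply_eq] at this
  have hz : Matrix.trace ((Bm t0) ^ k₀) = 0 :=
    aux_trace_pow_eq_zero_of_isNilpotent ⟨l, hBt0⟩ k₀ hk₀
  rw [htr t0 k₀] at hz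
  exact ht0 hz
end

section
/- Let T be a finite directed graph and let t be a function from directed edges of T to an abelian group H, extended additively to directed paths. For a cycle γ (closed path up to cyclic rotation) of length k, set t_n(γ) = (1/k)·t(γ) ∈ H ⊗ R. Let ω: H ⊗ R → R be linear, let M_ω be the supremum of ω(t_n(γ)) over all cycles γ, assumed attained, and let T_ω be the union of all cycles γ with ω(t_n(γ)) = M_ω. Then every cycle contained in the subgraph T_ω satisfies ω(t_n(γ)) = M_ω. -/
namespace Stmt14Aux

variable {V E : Type*} (src tgt : E → V)

/-- `IsWalk src tgt l a b` : the edge list `l` is a directed walk from `a` to `b`. -/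
def IsWalk : List E → V → V → Prop
  | [], a, b => a = b
  | e :: l, a, b => src e = a ∧ IsWalk l (tgt e) b

variable {src tgt}

lemma IsWalk.append {a b d : V} {l l' : List E}
    (h : IsWalk src tgt l a b) (h' : IsWalk src tgt l' b d) :
    IsWalk src tgt (l ++ l') a d := by
  induction l generalizing a with
  | nil => simp only [IsWalk] at h; subst h; simpa using h'
  | cons e l ih => exact ⟨h.1, ih h.2⟩

lemma isWalk_of_get {l : List E} (hl : l ≠ []) {a b : V}
    (hhead : src (l.head hl) = a) (hlast : tgt (l.getLast hl) = b)
    (hchain : ∀ i, (h : i + 1 < l.length) →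
      tgt (l.get ⟨i, by omega⟩) = src (l.get ⟨i + 1, h⟩)) :
    IsWalk src tgt l a b := by
  induction l generalizing a with
  | nil => exact absurd rfl hl
  | cons e l ih =>
    refine ⟨hhead, ?_⟩
    rcases eq_or_ne l [] with rfl | hl'
    · simpa [IsWalk] using hlast
    · refine ih hl' ?_ ?_ ?_
      · have := hchain 0 (by simp [List.length_pos_iff.mpr hl'])
        rw [← List.get_mk_zero (List.length_pos_iff.mpr hl')]
        exact (by simpa using this.symm)
      · rw [← hlast]; congr 1
        exact (List.getLast_cons hl').symm
      · intro i h
        have := hchain (i+1) (by simpa using Nat.succ_lt_succ h)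
        simpa [List.get] using this

lemma IsWalk.chain_get {l : List E} {a b : V} (h : IsWalk src tgt l a b)
    (i : ℕ) (hi : i + 1 < l.length) :
    tgt (l.get ⟨i, by omega⟩) = src (l.get ⟨i + 1, hi⟩) := by
  induction l generalizing a i with
  | nil => simp at hi
  | cons e l ih =>
    match i with
    | 0 =>
      rcases l with _ | ⟨f, l⟩
      · simp at hi
      · exact (h.2.1).symm
    | i + 1 =>
      have := ih h.2 i (by simpa using Nat.lt_of_succ_lt_succ hi)
      simpa [List.get] using this

lemma IsWalk.getLast_eq {l : List E} {a b : V} (h : IsWalk src tgt l a b) (hl : l ≠ []) :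
    tgt (l.getLast hl) = b := by
  induction l generalizing a with
  | nil => exact absurd rfl hl
  | cons e l ih =>
    rcases eq_or_ne l [] with rfl | hl'
    · simpa [IsWalk] using h.2
    · rw [List.getLast_cons hl']; exact ih h.2 hl'

lemma IsWalk.head_eq {l : List E} {a b : V} (h : IsWalk src tgt l a b) (hl : l ≠ []) :
    src (l.head hl) = a := by
  rcases l with _ | ⟨e, l⟩
  · exact absurd rfl hl
  · exact h.1

lemma fin_mk_add_one_of_lt {n i : ℕ} (h : i < n) :
    (⟨i, by omega⟩ : Fin (n + 1)) + 1 = ⟨i + 1, by omega⟩ := by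
  ext
  simp [Fin.add_def, Nat.mod_eq_of_lt]
  omega

lemma fin_mk_last_add_one {n : ℕ} :
    (⟨n, by omega⟩ : Fin (n + 1)) + 1 = 0 := by
  have : (⟨n, by omega⟩ : Fin (n + 1)) = Fin.last n := rfl
  rw [this, Fin.last_add_one]

/-- A cyclically-closed `Fin`-indexed cycle gives a closed walk on its `ofFn` list. -/
lemma isWalk_ofFn {n : ℕ} {g : Fin (n + 1) → E}
    (hg : ∀ i, tgt (g i) = src (g (i + 1))) :
    IsWalk src tgt (List.ofFn g) (src (g 0)) (src (g 0)) := by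
  have hne : List.ofFn g ≠ [] := by simp
  refine isWalk_of_get hne ?_ ?_ ?_
  · congr 1
    rw [← List.get_mk_zero (by simp : 0 < (List.ofFn g).length), List.get_ofFn]
    all_goals exact congrArg g (Fin.ext (by simp))
  · have h1 : (List.ofFn g).getLast hne = g ⟨n, by omega⟩ := by
      rw [List.getLast_eq_getElem, List.getElem_ofFn]
      all_goals exact congrArg g (Fin.ext (by simp))
    rw [h1, hg ⟨n, by omega⟩, fin_mk_last_add_one]
  · intro i hi
    have hi' : i + 1 < n + 1 := by simpa using hi
    have h1 : (List.ofFn g).get ⟨i, by omega⟩ = g ⟨i, by omega⟩ := by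
      rw [List.get_ofFn]
      all_goals exact congrArg g (Fin.ext (by simp))
    have h2 : (List.ofFn g).get ⟨i + 1, hi⟩ = g ⟨i + 1, by omega⟩ := by
      rw [List.get_ofFn]
      all_goals exact congrArg g (Fin.ext (by simp))
    rw [h1, h2, hg ⟨i, by omega⟩, fin_mk_add_one_of_lt (by omega)]

/-- Any closed walk satisfies the `hub` bound. -/
lemma hub_list {H : Type*} [AddCommGroup H] {src tgt : E → V}
    (t : E → H) (ω : H →+ ℝ) (M : ℝ)
    (hub : ∀ (k : ℕ) (c : Fin (k + 1) → E),
      (∀ i, tgt (c i) = src (c (i + 1))) →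
      ω (∑ i, t (c i)) / (k + 1 : ℝ) ≤ M)
    {l : List E} (hl : l ≠ []) {a : V} (h : IsWalk src tgt l a a) :
    ω ((l.map t).sum) ≤ M * l.length := by
  obtain ⟨n, hn⟩ : ∃ n, l.length = n + 1 :=
    Nat.exists_eq_succ_of_ne_zero (by simpa using hl)
  set g : Fin (n + 1) → E := fun i => l.get (Fin.cast hn.symm i) with hgdef
  have hchain : ∀ i, tgt (g i) = src (g (i + 1)) := by
    intro i
    rcases lt_or_eq_of_le (Nat.lt_succ_iff.mp i.isLt) with hi | hi
    · have hadd : i + 1 = (⟨i.val + 1, by omega⟩ : Fin (n + 1)) := by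
        ext
        simp [Fin.val_add]
        omega
      rw [hadd]
      exact h.chain_get i.val (by omega)
    · have hadd : i + 1 = 0 := by
        have hi1 : i = ⟨n, by omega⟩ := by ext; simpa using hi
        rw [hi1, fin_mk_last_add_one]
      rw [hadd]
      have h1 : tgt (g i) = a := by
        have hlast := h.getLast_eq hl
        rw [List.getLast_eq_getElem] at hlast
        rw [← hlast]
        exact congrArg tgt (congrArg l.get (Fin.ext (by
          simp only [Fin.coe_cast]
          omega)))
      have h2 : src (g 0) = a := by
        have hhd := h.head_eq hl
        rw [← List.get_mk_zero (by omega : 0 < l.length)] at hhd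
        rw [← hhd]
        exact congrArg src (congrArg l.get (Fin.ext (by simp)))
      rw [h1, h2]
  have hsum : (l.map t).sum = ∑ i, t (g i) := by
    conv_lhs => rw [← List.ofFn_get l]
    rw [List.map_ofFn, List.sum_ofFn]
    exact Fintype.sum_equiv (finCongr hn) _ _ (fun i => rfl)
  have := hub n g hchain
  rw [← hsum] at this
  have hpos : (0 : ℝ) < (n : ℝ) + 1 := by positivity
  rw [div_le_iff₀ hpos] at this
  calc ω ((l.map t).sum) ≤ M * ((n : ℝ) + 1) := this
    _ = M * l.length := by rw [hn]; push_cast; ring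

end Stmt14Aux

open Stmt14Aux in
/-- Extremal subgraph lemma: in a finite directed graph with an additive `H`-valued edge weight
`t` and a linear functional `ω` (given as an additive map `H → ℝ`), if `M` is the maximal value
of the normalized weight `ω(t(γ))/length(γ)` over all cycles `γ` (attained by some cycle), then
any cycle all of whose edges lie on maximizing cycles is itself maximizing. Cycles of length
`k+1` are encoded as `c : Fin (k+1) → E` with `tgt (c i) = src (c (i+1))` cyclically. -/
theorem stmt14 {V E H : Type*} [Fintype V] [Fintype E] [AddCommGroup H]
    (src tgt : E → V) (t : E → H) (ω : H →+ ℝ) (M : ℝ)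
    (hub : ∀ (k : ℕ) (c : Fin (k + 1) → E),
      (∀ i, tgt (c i) = src (c (i + 1))) →
      ω (∑ i, t (c i)) / (k + 1 : ℝ) ≤ M)
    (hatt : ∃ (k : ℕ) (c : Fin (k + 1) → E),
      (∀ i, tgt (c i) = src (c (i + 1))) ∧ ω (∑ i, t (c i)) / (k + 1 : ℝ) = M)
    (k : ℕ) (c : Fin (k + 1) → E)
    (hc : ∀ i, tgt (c i) = src (c (i + 1)))
    (hedge : ∀ i : Fin (k + 1), ∃ (k' : ℕ) (c' : Fin (k' + 1) → E),
      (∀ i', tgt (c' i') = src (c' (i' + 1))) ∧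
      ω (∑ i', t (c' i')) / (k' + 1 : ℝ) = M ∧ c i ∈ Set.range c') :
    ω (∑ i, t (c i)) / (k + 1 : ℝ) = M := by
  classical
  -- extract the maximizing cycles through each edge
  choose K γ hchain hval hmem using hedge
  choose j hj using hmem
  -- upper bound from `hub` on `c` itself
  have hkpos : (0 : ℝ) < (k : ℝ) + 1 := by positivity
  have hup : ω (∑ i, t (c i)) ≤ M * ((k : ℝ) + 1) := by
    have := hub k c hc
    rwa [div_le_iff₀ hkpos] at this
  -- rotated maximizing cycles starting at the chosen edge
  set g : ∀ i : Fin (k + 1), Fin (K i + 1) → E := fun i m => γ i (j i + m) with hgdef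
  have hgchain : ∀ i m, tgt (g i m) = src (g i (m + 1)) := by
    intro i m
    have := hchain i (j i + m)
    simpa [hgdef, add_assoc] using this
  have hg0 : ∀ i, g i 0 = c i := by
    intro i; simp [hgdef, hj]
  -- value of each maximizing cycle
  have hωγ : ∀ i, ω (∑ m, t (γ i m)) = M * ((K i : ℝ) + 1) := by
    intro i
    have hpos : (0 : ℝ) < (K i : ℝ) + 1 := by positivity
    have := hval i
    rw [div_eq_iff (ne_of_gt hpos)] at this
    exact this
  have hgsum : ∀ i, ∑ m, t (g i m) = ∑ m, t (γ i m) := by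
    intro i
    exact Equiv.sum_comp (Equiv.addLeft (j i)) (fun m => t (γ i m))
  -- the lists
  set L : Fin (k + 1) → List E := fun i => List.ofFn (g i) with hLdef
  set D : Fin (k + 1) → List E := fun i => List.ofFn (fun m : Fin (K i) => g i m.succ)
    with hDdef
  have hLD : ∀ i, L i = c i :: D i := by
    intro i
    rw [hLdef]
    simp only [List.ofFn_succ, hg0]
    rfl
  have hLwalk : ∀ i, IsWalk src tgt (L i) (src (c i)) (src (c i)) := by
    intro i
    have := isWalk_ofFn (src := src) (tgt := tgt) (hgchain i)
    rwa [hg0 i] at this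
  have hDwalk : ∀ i, IsWalk src tgt (D i) (tgt (c i)) (src (c i)) := by
    intro i
    have := hLwalk i
    rw [hLD i] at this
    exact this.2
  have hDlen : ∀ i, (D i).length = K i := by intro i; simp [hDdef]
  have hωD : ∀ i, ω (((D i).map t).sum) = M * ((K i : ℝ) + 1) - ω (t (c i)) := by
    intro i
    have hLsum : ((L i).map t).sum = t (c i) + ((D i).map t).sum := by
      rw [hLD i]; simp
    have hLsum' : ((L i).map t).sum = ∑ m, t (γ i m) := by
      rw [hLdef]
      simp only [List.map_ofFn, List.sum_ofFn]
      exact hgsum i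
    have : t (c i) + ((D i).map t).sum = ∑ m, t (γ i m) := by rw [← hLsum, hLsum']
    have h2 : ((D i).map t).sum = (∑ m, t (γ i m)) - t (c i) := by
      rw [← this]; abel
    rw [h2, map_sub, hωγ i]
  -- total length of the complementary paths
  set N : ℕ := ∑ i : Fin (k + 1), K i with hNdef
  by_cases hN : N = 0
  · -- every maximizing cycle is a loop on the edge itself
    have hKi : ∀ i, K i = 0 := by
      intro i
      exact Finset.sum_eq_zero_iff.mp (hNdef.symm.trans hN) i (Finset.mem_univ i)
    have hωc : ∀ i, ω (t (c i)) = M := by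
      intro i
      have h0 : K i = 0 := hKi i
      have hji : γ i (j i) = c i := hj i
      have hv := hωγ i
      have hall : ∀ m : Fin (K i + 1), γ i m = γ i (j i) :=
        fun m => congrArg (γ i) (Fin.ext (by omega))
      have hsum1 : ∑ m : Fin (K i + 1), t (γ i m) = (K i + 1) • t (γ i (j i)) := by
        calc ∑ m : Fin (K i + 1), t (γ i m)
            = ∑ _m : Fin (K i + 1), t (γ i (j i)) :=
              Finset.sum_congr rfl (fun m _ => by rw [hall m])
          _ = (K i + 1) • t (γ i (j i)) := by
              rw [Finset.sum_const, Finset.card_univ, Fintype.card_fin]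
      rw [hsum1, hji, h0] at hv
      simpa using hv
    have hfin : ω (∑ i, t (c i)) = ((k : ℝ) + 1) * M := by
      rw [map_sum]
      simp only [hωc]
      rw [Finset.sum_const, Finset.card_univ, Fintype.card_fin]
      push_cast
      ring
    rw [hfin, mul_comm, mul_div_assoc, div_self (ne_of_gt hkpos), mul_one]
  · -- build the long complementary closed walk
    set G : ℕ → List E := fun i => D ⟨k - i, by omega⟩ with hGdef
    set R : ℕ → List E := fun m => ((List.range (m + 1)).map G).flatten with hRdef
    have hR0 : R 0 = G 0 := by simp [hRdef, List.range_succ]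
    have hstep : ∀ m, R (m + 1) = R m ++ G (m + 1) := by
      intro m
      rw [hRdef]
      simp [List.range_succ]
    -- successor fact on Fin indices
    have hcstep : ∀ i : ℕ, (hi : i < k) → tgt (c ⟨i, by omega⟩) = src (c ⟨i + 1, by omega⟩) := by
      intro i hi
      have := hc ⟨i, by omega⟩
      rwa [fin_mk_add_one_of_lt hi] at this
    have hwalk : ∀ m, m ≤ k →
        IsWalk src tgt (R m) (tgt (c ⟨k, by omega⟩)) (src (c ⟨k - m, by omega⟩)) := by
      intro m
      induction m with
      | zero =>
        intro _
        rw [hR0]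
        simpa [hGdef] using hDwalk ⟨k, by omega⟩
      | succ m ih =>
        intro hm
        rw [hstep m]
        refine IsWalk.append (ih (by omega)) ?_
        have h1 : IsWalk src tgt (G (m + 1)) (tgt (c ⟨k - (m + 1), by omega⟩))
            (src (c ⟨k - (m + 1), by omega⟩)) := by
          simpa [hGdef] using hDwalk ⟨k - (m + 1), by omega⟩
        have h2 : tgt (c ⟨k - (m + 1), by omega⟩) = src (c ⟨k - m, by omega⟩) := by
          have h3 := hcstep (k - (m + 1)) (by omega)
          have h4 : (⟨k - (m + 1) + 1, by omega⟩ : Fin (k + 1)) = ⟨k - m, by omega⟩ := by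
            ext
            show k - (m + 1) + 1 = k - m
            omega
          rwa [h4] at h3
        rwa [h2] at h1
    have hclosed : IsWalk src tgt (R k) (src (c 0)) (src (c 0)) := by
      have := hwalk k le_rfl
      have hlast : tgt (c ⟨k, by omega⟩) = src (c 0) := by
        have := hc ⟨k, by omega⟩
        rwa [fin_mk_last_add_one] at this
      have h0 : (⟨k - k, by omega⟩ : Fin (k + 1)) = 0 := by ext; simp
      rw [hlast, h0] at this
      exact this
    -- reindexing equivalence
    have hreidxN : ∀ (f : Fin (k + 1) → ℕ),
        ∑ i ∈ Finset.range (k + 1), f ⟨k - i, by omega⟩ = ∑ i : Fin (k + 1), f i := by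
      intro f
      rw [← Fin.sum_univ_eq_sum_range (fun i => f ⟨k - i, by omega⟩)]
      exact Equiv.sum_comp
        ⟨fun i : Fin (k + 1) => ⟨k - i.val, by omega⟩,
         fun i : Fin (k + 1) => ⟨k - i.val, by omega⟩,
         fun i => by ext; show k - (k - i.val) = i.val; omega,
         fun i => by ext; show k - (k - i.val) = i.val; omega⟩ f
    have hreidx : ∀ (f : Fin (k + 1) → ℝ),
        ∑ i ∈ Finset.range (k + 1), f ⟨k - i, by omega⟩ = ∑ i : Fin (k + 1), f i := by
      intro f
      rw [← Fin.sum_univ_eq_sum_range (fun i => f ⟨k - i, by omega⟩)]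
      exact Equiv.sum_comp
        ⟨fun i : Fin (k + 1) => ⟨k - i.val, by omega⟩,
         fun i : Fin (k + 1) => ⟨k - i.val, by omega⟩,
         fun i => by ext; show k - (k - i.val) = i.val; omega,
         fun i => by ext; show k - (k - i.val) = i.val; omega⟩ f
    -- length of R m
    have hlen : ∀ m, (R m).length = ∑ i ∈ Finset.range (m + 1), (G i).length := by
      intro m
      induction m with
      | zero => simp [hR0]
      | succ m ih => rw [hstep m, List.length_append, ih, ← Finset.sum_range_succ]
    have hlenRk : (R k).length = N := by
      rw [hlen k, hNdef]
      have : ∀ i ∈ Finset.range (k + 1), (G i).length = K ⟨k - i, by omega⟩ := by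
        intro i _
        simp [hGdef, hDlen]
      rw [Finset.sum_congr rfl this]
      exact hreidxN K
    -- weight of R m
    have hwt : ∀ m, ω (((R m).map t).sum) = ∑ i ∈ Finset.range (m + 1), ω (((G i).map t).sum) := by
      intro m
      induction m with
      | zero => simp [hR0]
      | succ m ih =>
        rw [hstep m, List.map_append, List.sum_append, map_add, ih, ← Finset.sum_range_succ]
    have hwtRk : ω (((R k).map t).sum)
        = M * (N : ℝ) + M * ((k : ℝ) + 1) - ω (∑ i, t (c i)) := by
      rw [hwt k]
      have : ∀ i ∈ Finset.range (k + 1), ω (((G i).map t).sum)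
          = M * ((K ⟨k - i, by omega⟩ : ℝ) + 1) - ω (t (c ⟨k - i, by omega⟩)) := by
        intro i _
        simp only [hGdef]
        exact hωD _
      rw [Finset.sum_congr rfl this]
      rw [hreidx (fun i => M * ((K i : ℝ) + 1) - ω (t (c i)))]
      rw [Finset.sum_sub_distrib, ← map_sum]
      have h1 : ∑ i : Fin (k + 1), M * ((K i : ℝ) + 1)
          = M * (N : ℝ) + M * ((k : ℝ) + 1) := by
        rw [← Finset.mul_sum]
        have : ∑ i : Fin (k + 1), ((K i : ℝ) + 1) = (N : ℝ) + ((k : ℝ) + 1) := by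
          rw [Finset.sum_add_distrib, Finset.sum_const, Finset.card_univ, Fintype.card_fin]
          push_cast [hNdef]
          ring
        rw [this]; ring
      rw [h1]
    -- apply hub to the long closed walk
    have hRne : R k ≠ [] := by
      intro habs
      rw [habs] at hlenRk
      simp at hlenRk
      omega
    have hbound := hub_list t ω M hub hRne hclosed
    rw [hwtRk, hlenRk] at hbound
    have hlow : M * ((k : ℝ) + 1) ≤ ω (∑ i, t (c i)) := by linarith
    have heq : ω (∑ i, t (c i)) = M * ((k : ℝ) + 1) := le_antisymm hup hlow
    rw [heq, mul_div_assoc, div_self (ne_of_gt hkpos), mul_one]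
end

section
/- Let T be a finite directed graph, H a finitely generated abelian group, and t an additive H-valued function on directed paths of T. Define the normalized translation t_n(γ) = (1/length γ)·t(γ) ∈ H ⊗ R for each cycle γ. Then the set {t_n(γ) : γ a cycle in T} is contained in the convex hull of {t_n(γ) : γ a simple cycle in T}; in particular, since there are finitely many simple cycles, this convex hull is a compact convex polytope. -/
open scoped TensorProduct

/-- The set of normalized translations `t_n(γ) = (1/length γ) • t(γ) ∈ H ⊗ ℝ` of all cycles
in a finite directed graph. Cycles of length `k+1` are encoded as `c : Fin (k+1) → E`. -/
def cycleValues {V E H : Type*} [Fintype V] [Fintype E] [AddCommGroup H]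
    (src tgt : E → V) (t : E → H) : Set (ℝ ⊗[ℤ] H) :=
  {x | ∃ (k : ℕ) (c : Fin (k + 1) → E),
    (∀ i, tgt (c i) = src (c (i + 1))) ∧
    x = ((k + 1 : ℝ))⁻¹ • ∑ i, (1 : ℝ) ⊗ₜ[ℤ] t (c i)}

/-- As `cycleValues` but restricted to simple cycles (no repeated vertex). -/
def simpleCycleValues {V E H : Type*} [Fintype V] [Fintype E] [AddCommGroup H]
    (src tgt : E → V) (t : E → H) : Set (ℝ ⊗[ℤ] H) :=
  {x | ∃ (k : ℕ) (c : Fin (k + 1) → E),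
    (∀ i, tgt (c i) = src (c (i + 1))) ∧ Function.Injective (src ∘ c) ∧
    x = ((k + 1 : ℝ))⁻¹ • ∑ i, (1 : ℝ) ⊗ₜ[ℤ] t (c i)}

private lemma fin_add_one_val {n : ℕ} (i : Fin (n+1)) (h : i.val + 1 < n+1) :
    ((i+1 : Fin (n+1))).val = i.val + 1 := by
  simp [Fin.add_def, Nat.mod_eq_of_lt, h]

private lemma fin_add_one_last {n : ℕ} (i : Fin (n+1)) (h : i.val + 1 = n+1) :
    (i+1 : Fin (n+1)) = 0 := by
  have : i = Fin.last n := Fin.ext (by simp [Fin.val_last]; omega)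
  rw [this, Fin.last_add_one]

private lemma fin_mk_add_one {n a b : ℕ} (ha : a < n+1) (hab : a + 1 = b) (hb : b < n+1) :
    (⟨a, ha⟩ : Fin (n+1)) + 1 = ⟨b, hb⟩ := by
  apply Fin.ext
  rw [fin_add_one_val ⟨a, ha⟩ (show a + 1 < n+1 by omega)]
  exact hab

private lemma fin_mk_add_one_last {n a : ℕ} (ha : a < n+1) (h : a + 1 = n+1) :
    (⟨a, ha⟩ : Fin (n+1)) + 1 = 0 :=
  fin_add_one_last ⟨a, ha⟩ h

private lemma key {V E H : Type*} [Fintype V] [Fintype E] [AddCommGroup H]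
    (src tgt : E → V) (t : E → H) :
    ∀ (k : ℕ) (c : Fin (k + 1) → E), (∀ i, tgt (c i) = src (c (i + 1))) →
      ((k + 1 : ℝ))⁻¹ • ∑ i, (1 : ℝ) ⊗ₜ[ℤ] t (c i) ∈
        convexHull ℝ (simpleCycleValues src tgt t) := by
  intro k
  induction k using Nat.strong_induction_on with
  | _ k IH =>
  have main : ∀ (c : Fin (k+1) → E), (∀ x, tgt (c x) = src (c (x + 1))) →
      ∀ d : Fin (k+1), d ≠ 0 → src (c 0) = src (c d) →
      ((k + 1 : ℝ))⁻¹ • ∑ x, (1 : ℝ) ⊗ₜ[ℤ] t (c x) ∈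
        convexHull ℝ (simpleCycleValues src tgt t) := by
    intro c hc d hdne hd0
    have hj1 : 1 ≤ d.val := Nat.pos_of_ne_zero fun h => hdne (Fin.ext h)
    have hjk : d.val ≤ k := Nat.lt_succ_iff.mp d.isLt
    set j := d.val with hjdef
    have ceq : ∀ (a b : ℕ) (ha : a < k+1) (hb : b < k+1), a = b →
        c ⟨a, ha⟩ = c ⟨b, hb⟩ := fun a b ha hb h => congrArg c (Fin.ext h)
    have c0 : ∀ (ha : (0:ℕ) < k+1), c ⟨0, ha⟩ = c 0 :=
      fun ha => congrArg c (Fin.ext (by simp))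
    have cd : ∀ (ha : j < k+1), c ⟨j, ha⟩ = c d :=
      fun ha => congrArg c (Fin.ext hjdef.symm)
    set c₁ : Fin ((j-1)+1) → E := fun x => c ⟨x.val, by have := x.isLt; omega⟩ with hc₁def
    set c₂ : Fin ((k-j)+1) → E := fun x => c ⟨j + x.val, by have := x.isLt; omega⟩ with hc₂def
    have hc₁ : ∀ x, tgt (c₁ x) = src (c₁ (x + 1)) := by
      intro x
      have hx : x.val < j := by have := x.isLt; omega
      simp only [hc₁def]
      by_cases h : x.val + 1 < j
      · have e1 : ((x+1 : Fin ((j-1)+1))).val = x.val + 1 := fin_add_one_val x (by omega)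
        rw [ceq _ (x.val+1) _ (by omega) e1]
        have horig := hc ⟨x.val, by omega⟩
        have e2 : ((⟨x.val, by omega⟩ : Fin (k+1)) + 1) = (⟨x.val+1, by omega⟩ : Fin (k+1)) :=
          fin_mk_add_one _ rfl _
        rw [e2] at horig
        exact horig
      · have hxj : x.val + 1 = j := by omega
        have e1 : (x + 1 : Fin ((j-1)+1)) = 0 := fin_add_one_last x (by omega)
        rw [e1, ceq _ 0 _ (by omega) (Fin.val_zero _), c0, hd0]
        have horig := hc ⟨x.val, by omega⟩
        have e2 : ((⟨x.val, by omega⟩ : Fin (k+1)) + 1) = (⟨j, by omega⟩ : Fin (k+1)) :=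
          fin_mk_add_one _ hxj _
        rw [e2, cd] at horig
        exact horig
    have hc₂ : ∀ x, tgt (c₂ x) = src (c₂ (x + 1)) := by
      intro x
      have hx : x.val ≤ k - j := by have := x.isLt; omega
      simp only [hc₂def]
      by_cases h : x.val + 1 < (k-j)+1
      · have e1 : ((x+1 : Fin ((k-j)+1))).val = x.val + 1 := fin_add_one_val x h
        rw [ceq _ (j + (x.val+1)) _ (by omega) (show (j + ((x+1 : Fin ((k-j)+1)).val) : ℕ) = j + (x.val+1) from by rw [e1])]
        have horig := hc ⟨j + x.val, by omega⟩
        have e2 : ((⟨j + x.val, by omega⟩ : Fin (k+1)) + 1)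
            = (⟨j + (x.val+1), by omega⟩ : Fin (k+1)) :=
          fin_mk_add_one _ (by omega) _
        rw [e2] at horig
        exact horig
      · have hxk : x.val = k - j := by omega
        have e1 : (x + 1 : Fin ((k-j)+1)) = 0 := fin_add_one_last x (by omega)
        rw [e1, ceq _ j _ (by omega) (show (j + ((0 : Fin ((k-j)+1)).val) : ℕ) = j from by simp), cd, ← hd0]
        have horig := hc ⟨j + x.val, by omega⟩
        have e2 : ((⟨j + x.val, by omega⟩ : Fin (k+1)) + 1) = 0 :=
          fin_mk_add_one_last _ (by omega)
        rw [e2] at horig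
        exact horig
    set F : E → ℝ ⊗[ℤ] H := fun e => (1 : ℝ) ⊗ₜ[ℤ] t e with hF
    set g : ℕ → ℝ ⊗[ℤ] H := fun m => if h : m < k+1 then F (c ⟨m, h⟩) else 0 with hg
    have h1 : ∑ x, F (c x) = ∑ m ∈ Finset.range (k+1), g m := by
      rw [← Fin.sum_univ_eq_sum_range g (k+1)]
      refine Finset.sum_congr rfl fun x _ => ?_
      simp only [hg]
      rw [dif_pos x.isLt]
    have h2 : ∑ m ∈ Finset.range (k+1), g m
        = ∑ m ∈ Finset.range j, g m + ∑ m ∈ Finset.range (k+1-j), g (j + m) := by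
      conv_lhs => rw [show k+1 = j + (k+1-j) from by omega]
      rw [Finset.sum_range_add]
    have h3 : ∑ m ∈ Finset.range j, g m = ∑ x, F (c₁ x) := by
      conv_lhs => rw [show j = (j-1)+1 from by omega]
      rw [← Fin.sum_univ_eq_sum_range g ((j-1)+1)]
      refine Finset.sum_congr rfl fun x _ => ?_
      simp only [hg]
      rw [dif_pos (show x.val < k+1 by have := x.isLt; omega)]
    have h4 : ∑ m ∈ Finset.range (k+1-j), g (j + m) = ∑ x, F (c₂ x) := by
      conv_lhs => rw [show k+1-j = (k-j)+1 from by omega]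
      rw [← Fin.sum_univ_eq_sum_range (fun m => g (j + m)) ((k-j)+1)]
      refine Finset.sum_congr rfl fun x _ => ?_
      simp only [hg]
      rw [dif_pos (show j + x.val < k+1 by have := x.isLt; omega)]
    have hA := IH (j-1) (by omega) c₁ hc₁
    have hB := IH (k-j) (by omega) c₂ hc₂
    have hjr : ((j-1 : ℕ) : ℝ) + 1 = (j : ℝ) := by
      push_cast [Nat.cast_sub hj1]; ring
    have hkr : ((k-j : ℕ) : ℝ) + 1 = (k : ℝ) + 1 - (j : ℝ) := by
      push_cast [Nat.cast_sub hjk]; ring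
    rw [hjr] at hA
    rw [hkr] at hB
    have hj0 : (j : ℝ) ≠ 0 := by positivity
    have hk0 : (k : ℝ) + 1 ≠ 0 := by positivity
    have hjR : (j : ℝ) ≤ (k : ℝ) := by exact_mod_cast hjk
    have hconv := convex_convexHull ℝ (simpleCycleValues src tgt t)
    have hcomb := hconv hA hB
      (show (0:ℝ) ≤ (j : ℝ)/((k:ℝ)+1) by positivity)
      (show (0:ℝ) ≤ ((k:ℝ)+1-(j:ℝ))/((k:ℝ)+1) by
        apply div_nonneg <;> [linarith; positivity])
      (show (j : ℝ)/((k:ℝ)+1) + ((k:ℝ)+1-(j:ℝ))/((k:ℝ)+1) = 1 by field_simp; ring)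
    rw [smul_smul, smul_smul] at hcomb
    have e1 : ((k:ℝ)+1)⁻¹ = (j : ℝ)/((k:ℝ)+1) * ((j:ℝ))⁻¹ := by field_simp
    have e2 : ((k:ℝ)+1)⁻¹ = ((k:ℝ)+1-(j:ℝ))/((k:ℝ)+1) * (((k:ℝ)+1-(j:ℝ)))⁻¹ := by
      have hkj0 : (k : ℝ) + 1 - (j : ℝ) ≠ 0 := by
        intro h0; rw [sub_eq_zero] at h0; linarith
      field_simp
    rw [← e1, ← e2, ← smul_add] at hcomb
    have hS : (∑ x, F (c x)) = ∑ x, F (c₁ x) + ∑ x, F (c₂ x) := by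
      rw [h1, h2, h3, h4]
    rw [hS]
    exact hcomb
  intro c hc
  by_cases hinj : Function.Injective (src ∘ c)
  · exact subset_convexHull ℝ _ ⟨k, c, hc, hinj, rfl⟩
  rw [Function.not_injective_iff] at hinj
  obtain ⟨i, j0, hij, hne⟩ := hinj
  set c' : Fin (k+1) → E := fun x => c (x + i) with hc'def
  have hc' : ∀ x, tgt (c' x) = src (c' (x + 1)) := by
    intro x
    have := hc (x + i)
    simpa [hc'def, add_right_comm] using this
  have hsum : ∑ x, (1 : ℝ) ⊗ₜ[ℤ] t (c' x) = ∑ x, (1 : ℝ) ⊗ₜ[ℤ] t (c x) :=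
    Fintype.sum_equiv (Equiv.addRight i) _ _ (fun x => rfl)
  have hdne : (j0 - i : Fin (k+1)) ≠ 0 := sub_ne_zero.mpr (Ne.symm hne)
  have hd0 : src (c' 0) = src (c' (j0 - i)) := by
    simp only [hc'def, zero_add, sub_add_cancel]
    exact hij
  rw [← hsum]
  exact main c' hc' (j0 - i) hdne hd0

/-- The normalized translation of any cycle lies in the convex hull of the normalized
translations of the simple cycles; since there are finitely many simple cycles, the latter set
is finite (so this hull is a polytope). -/
theorem stmt15 {V E H : Type*} [Fintype V] [Fintype E] [AddCommGroup H]
    (hH : AddGroup.FG H) (src tgt : E → V) (t : E → H) :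
    cycleValues src tgt t ⊆ convexHull ℝ (simpleCycleValues src tgt t) ∧
    (simpleCycleValues src tgt t).Finite := by
  constructor
  · rintro x ⟨k, c, hc, rfl⟩
    exact key src tgt t k c hc
  · have hsub : simpleCycleValues src tgt t ⊆ Set.range
        (fun p : (Σ k : Fin (Fintype.card V + 1), (Fin ((k : ℕ) + 1) → E)) =>
          (((p.1 : ℕ) : ℝ) + 1)⁻¹ • ∑ i, (1 : ℝ) ⊗ₜ[ℤ] t (p.2 i)) := by
      rintro x ⟨k, c, hc, hinj, rfl⟩
      have hcard : k + 1 ≤ Fintype.card V := by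
        simpa using Fintype.card_le_of_injective _ hinj
      exact ⟨⟨⟨k, by omega⟩, c⟩, rfl⟩
    exact (Set.finite_range _).subset hsub
end
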